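/- arXiv:1805.08705 — 2 statements merged into one kernel-verified Lean document; each statement's English description precedes it below -/
import Mathlib

section
/- Let g be nonnegative, 1-Lipschitz and nondecreasing in its first argument, and 1-Lipschitz and nonincreasing in its second argument. Let d be a metric on ℝ^r. Then for any h_i, h_j, h_k, c, c' ∈ ℝ^r: g(d(h_i,h_j), d(h_i,h_k)) ≤ g(d(h_i,c), d(h_i,c')) + d(h_j,c) + d(h_k,c'). -/
theorem stmt_2 (r : ℕ) (g : ℝ → ℝ → ℝ)
    (hnonneg : ∀ a b, 0 ≤ g a b)
    (hmono1 : ∀ a₁ a₂ b, a₁ ≤ a₂ → 0 ≤ g a₂ b - g a₁ b ∧ g a₂ b - g a₁ b ≤ a₂ - a₁)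
    (hmono2 : ∀ a b₁ b₂, b₁ ≤ b₂ → 0 ≤ g a b₁ - g a b₂ ∧ g a b₁ - g a b₂ ≤ b₂ - b₁)
    (hi hj hk c c' : EuclideanSpace ℝ (Fin r)) :
    g (dist hi hj) (dist hi hk) ≤ g (dist hi c) (dist hi c') + dist hj c + dist hk c' := by
  set a := dist hi hj
  set b := dist hi hk
  set A := dist hi c
  set B := dist hi c'
  have hja : |a - A| ≤ dist hj c := by
    have := abs_dist_sub_le hj c hi
    simpa [a, A, dist_comm hj hi, dist_comm c hi] using this
  have hkb : |b - B| ≤ dist hk c' := by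
    have := abs_dist_sub_le hk c' hi
    simpa [b, B, dist_comm hk hi, dist_comm c' hi] using this
  have h1 : g a b ≤ g A b + dist hj c := by
    rcases le_total a A with h | h
    · have := (hmono1 a A b h).1
      have h0 : (0:ℝ) ≤ dist hj c := dist_nonneg
      linarith
    · have := (hmono1 A a b h).2
      have : g a b - g A b ≤ a - A := this
      have habs : a - A ≤ |a - A| := le_abs_self _
      linarith
  have h2 : g A b ≤ g A B + dist hk c' := by
    rcases le_total b B with h | h
    · have := (hmono2 A b B h).2
      have habs : B - b ≤ |b - B| := by rw [abs_sub_comm]; exact le_abs_self _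
      linarith
    · have := (hmono2 A B b h).1
      have h0 : (0:ℝ) ≤ dist hk c' := dist_nonneg
      linarith
  linarith
end

section
/- Fix a finite index set I of size n, labels y : I → Fin C with each label class of size exactly n/C (assume C divides n), hashcodes h : I → ℝ^r with metric d, centers c : Fin C → ℝ^r, and g as a nonnegative 1-Lipschitz monotone triplet loss. Define L_t = Σ over triples (i,j,k) with y i = y j and y i ≠ y k of g(d(h i, h j), d(h i, h k)), and define l_c(i) = (1/(C−1)) Σ_{l ≠ y i} g(d(h i, c (y i)), d(h i, c l)). Then L_t ≤ (n/C)² (C−1) Σ_i [ l_c(i) + 2 d(h i, c (y i)) ]. -/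
open Finset

theorem stmt_3 (r n C : ℕ) (hC : 2 ≤ C) (hdvd : C ∣ n)
    (I : Type) [Fintype I] (hcard : Fintype.card I = n)
    (y : I → Fin C)
    (hfiber : ∀ s : Fin C, (Finset.univ.filter (fun i => y i = s)).card = n / C)
    (h : I → EuclideanSpace ℝ (Fin r)) (c : Fin C → EuclideanSpace ℝ (Fin r))
    (g : ℝ → ℝ → ℝ)
    (hnonneg : ∀ a b, 0 ≤ g a b)
    (hmono1 : ∀ a₁ a₂ b, a₁ ≤ a₂ → 0 ≤ g a₂ b - g a₁ b ∧ g a₂ b - g a₁ b ≤ a₂ - a₁)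
    (hmono2 : ∀ a b₁ b₂, b₁ ≤ b₂ → 0 ≤ g a b₁ - g a b₂ ∧ g a b₁ - g a b₂ ≤ b₂ - b₁) :
    ∑ i : I, ∑ j ∈ Finset.univ.filter (fun j => y j = y i),
      ∑ k ∈ Finset.univ.filter (fun k => y k ≠ y i),
        g (dist (h i) (h j)) (dist (h i) (h k))
    ≤ ((n : ℝ) / C) ^ 2 * (C - 1) *
      ∑ i : I, ((1 / ((C : ℝ) - 1)) *
          (∑ l ∈ Finset.univ.erase (y i), g (dist (h i) (c (y i))) (dist (h i) (c l)))
        + 2 * dist (h i) (c (y i))) := by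
  classical
  set m := n / C with hm
  have hCpos : 0 < C := by omega
  have hnm : m * C = n := Nat.div_mul_cancel hdvd
  set D : I → ℝ := fun i => dist (h i) (c (y i)) with hD
  set G : I → Fin C → ℝ := fun i l => g (dist (h i) (c (y i))) (dist (h i) (c l)) with hG
  -- cardinalities
  have hScard : ∀ s : Fin C, (univ.filter (fun j : I => y j = s)).card = m := hfiber
  have hTcard : ∀ s : Fin C, (univ.filter (fun k : I => y k ≠ s)).card = m * (C - 1) := by
    intro s
    have h1 := Finset.card_filter_add_card_filter_not
      (s := (univ : Finset I)) (p := fun k => y k = s)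
    rw [Finset.card_univ, hcard, hScard] at h1
    simp only [ne_eq]
    have h2 : m * (C - 1) + m = n := by
      have h3 : m * (C - 1) + m = m * C := by
        have hC1 : C - 1 + 1 = C := by omega
        calc m * (C - 1) + m = m * (C - 1 + 1) := by ring
          _ = m * C := by rw [hC1]
      omega
    omega
  -- pointwise bound
  have key : ∀ i j k : I, y j = y i → y k ≠ y i →
      g (dist (h i) (h j)) (dist (h i) (h k)) ≤
        G i (y k) + dist (h j) (c (y i)) + D k := by
    intro i j k hj hk
    set a := dist (h i) (h j) with ha
    set a' := dist (h i) (c (y i)) with ha'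
    set b := dist (h i) (h k) with hb
    set b' := dist (h i) (c (y k)) with hb'
    have habs1 : |a - a'| ≤ dist (h j) (c (y i)) := by
      have := abs_dist_sub_le (h j) (c (y i)) (h i)
      rw [dist_comm (h j) (h i), dist_comm (c (y i)) (h i)] at this
      exact this
    have habs2 : |b - b'| ≤ dist (h k) (c (y k)) := by
      have := abs_dist_sub_le (h k) (c (y k)) (h i)
      rw [dist_comm (h k) (h i), dist_comm (c (y k)) (h i)] at this
      exact this
    have hd1 : (0:ℝ) ≤ dist (h j) (c (y i)) := dist_nonneg
    have hd2 : (0:ℝ) ≤ dist (h k) (c (y k)) := dist_nonneg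
    have e1 := abs_le.mp habs1
    have e2 := abs_le.mp habs2
    have h1 : g a b ≤ g a' b + dist (h j) (c (y i)) := by
      rcases le_total a a' with hle | hle
      · have := (hmono1 a a' b hle).1
        linarith
      · have := (hmono1 a' a b hle).2
        linarith [e1.2]
    have h2 : g a' b ≤ g a' b' + dist (h k) (c (y k)) := by
      rcases le_total b b' with hle | hle
      · have := (hmono2 a' b b' hle).2
        linarith [e2.1]
      · have := (hmono2 a' b' b hle).1
        linarith
    simp only [hG, hD]
    linarith
  -- step 1: bound LHS by sum of the three pieces
  have step1 :
      ∑ i : I, ∑ j ∈ univ.filter (fun j => y j = y i),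
        ∑ k ∈ univ.filter (fun k => y k ≠ y i),
          g (dist (h i) (h j)) (dist (h i) (h k))
      ≤ ∑ i : I, ∑ j ∈ univ.filter (fun j => y j = y i),
        ∑ k ∈ univ.filter (fun k => y k ≠ y i),
          (G i (y k) + dist (h j) (c (y i)) + D k) := by
    refine Finset.sum_le_sum fun i _ => Finset.sum_le_sum fun j hj => Finset.sum_le_sum fun k hk => ?_
    simp only [Finset.mem_filter, Finset.mem_univ, true_and] at hj hk
    exact key i j k hj hk
  refine le_trans step1 ?_
  -- compute each piece
  -- piece A
  have innerA : ∀ i : I, ∑ k ∈ univ.filter (fun k => y k ≠ y i), G i (y k)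
      = ∑ l ∈ univ.erase (y i), (m : ℝ) * G i l := by
    intro i
    rw [← Finset.sum_fiberwise_of_maps_to (g := y) (t := univ.erase (y i))
      (fun k hk => by simp only [Finset.mem_filter, Finset.mem_univ, true_and] at hk
                      simp [hk]) (fun k => G i (y k))]
    refine Finset.sum_congr rfl fun l hl => ?_
    have hl' : l ≠ y i := (Finset.mem_erase.mp hl).1
    have hfe : (univ.filter (fun k : I => y k ≠ y i)).filter (fun k => y k = l)
        = univ.filter (fun k : I => y k = l) := by
      rw [Finset.filter_filter]
      refine Finset.filter_congr fun k _ => ?_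
      constructor
      · exact fun hh => hh.2
      · intro hh; exact ⟨by rw [hh]; exact hl', hh⟩
    rw [hfe]
    rw [Finset.sum_congr rfl (fun k hk => by
      have : y k = l := (Finset.mem_filter.mp hk).2
      rw [this])]
    rw [Finset.sum_const, hScard, nsmul_eq_mul]
  -- swap lemma for D sums
  have swapS : ∑ i : I, ∑ j ∈ univ.filter (fun j => y j = y i), D j
      = (m : ℝ) * ∑ j : I, D j := by
    simp only [Finset.sum_filter]
    rw [Finset.sum_comm, Finset.mul_sum]
    refine Finset.sum_congr rfl fun j _ => ?_
    rw [← Finset.sum_filter, Finset.sum_const, nsmul_eq_mul]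
    congr 1
    have : (univ.filter fun i : I => y j = y i) = (univ.filter fun i : I => y i = y j) := by
      refine Finset.filter_congr fun i _ => by constructor <;> (intro hh; exact hh.symm)
    rw [this, hScard]
  have swapT : ∑ i : I, ∑ k ∈ univ.filter (fun k => y k ≠ y i), D k
      = ((m * (C - 1) : ℕ) : ℝ) * ∑ k : I, D k := by
    simp only [Finset.sum_filter]
    rw [Finset.sum_comm, Finset.mul_sum]
    refine Finset.sum_congr rfl fun k _ => ?_
    rw [← Finset.sum_filter, Finset.sum_const, nsmul_eq_mul]
    congr 1
    have : (univ.filter fun i : I => y k ≠ y i) = (univ.filter fun i : I => y i ≠ y k) := by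
      refine Finset.filter_congr fun i _ => by constructor <;> (intro hh; exact fun e => hh e.symm)
    rw [this, hTcard]
  -- now compute total bound
  have expand :
      ∑ i : I, ∑ j ∈ univ.filter (fun j => y j = y i),
        ∑ k ∈ univ.filter (fun k => y k ≠ y i),
          (G i (y k) + dist (h j) (c (y i)) + D k)
      = (m : ℝ) * ∑ i : I, ∑ l ∈ univ.erase (y i), (m : ℝ) * G i l
        + ((m * (C-1) : ℕ) : ℝ) * ((m:ℝ) * ∑ j : I, D j)
        + (m : ℝ) * (((m * (C-1) : ℕ) : ℝ) * ∑ k : I, D k) := by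
    have hsplit : ∀ i : I, ∑ j ∈ univ.filter (fun j => y j = y i),
        ∑ k ∈ univ.filter (fun k => y k ≠ y i),
          (G i (y k) + dist (h j) (c (y i)) + D k)
        = (m:ℝ) * (∑ k ∈ univ.filter (fun k => y k ≠ y i), G i (y k))
          + ((m * (C-1) : ℕ):ℝ) * (∑ j ∈ univ.filter (fun j => y j = y i), D j)
          + (m:ℝ) * (∑ k ∈ univ.filter (fun k => y k ≠ y i), D k) := by
      intro i
      have : ∀ j : I, ∑ k ∈ univ.filter (fun k => y k ≠ y i),
          (G i (y k) + dist (h j) (c (y i)) + D k)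
          = (∑ k ∈ univ.filter (fun k => y k ≠ y i), G i (y k))
            + ((m * (C-1) : ℕ):ℝ) * dist (h j) (c (y i))
            + (∑ k ∈ univ.filter (fun k => y k ≠ y i), D k) := by
        intro j
        rw [Finset.sum_add_distrib, Finset.sum_add_distrib, Finset.sum_const,
          hTcard, nsmul_eq_mul]
      simp only [this]
      rw [Finset.sum_add_distrib, Finset.sum_add_distrib, Finset.sum_const, Finset.sum_const,
        hScard, nsmul_eq_mul, nsmul_eq_mul, ← Finset.mul_sum]
      have hjD : ∑ j ∈ univ.filter (fun j => y j = y i), dist (h j) (c (y i))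
          = ∑ j ∈ univ.filter (fun j => y j = y i), D j := by
        refine Finset.sum_congr rfl fun j hj => ?_
        have : y j = y i := (Finset.mem_filter.mp hj).2
        simp [hD, this]
      rw [hjD]
      try ring
    simp only [hsplit, innerA]
    rw [Finset.sum_add_distrib, Finset.sum_add_distrib,
      ← Finset.mul_sum, ← Finset.mul_sum, ← Finset.mul_sum, swapS, swapT]
  rw [expand]
  -- RHS computation
  have hmC : ((m : ℝ)) = (n : ℝ) / C := by
    rw [hm, Nat.cast_div hdvd]
    exact Nat.cast_ne_zero.mpr (by omega)
  have hC1 : ((C : ℝ) - 1) ≠ 0 := by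
    have : (2:ℝ) ≤ C := by exact_mod_cast hC
    linarith
  have hcastC1 : (((C - 1 : ℕ)) : ℝ) = (C : ℝ) - 1 := by
    have : 1 ≤ C := by omega
    push_cast [Nat.cast_sub this]
    ring
  have hRHS : ((n : ℝ) / C) ^ 2 * (C - 1) *
      ∑ i : I, ((1 / ((C : ℝ) - 1)) * (∑ l ∈ univ.erase (y i), G i l) + 2 * D i)
      = (m:ℝ)^2 * (∑ i : I, ∑ l ∈ univ.erase (y i), G i l)
        + 2 * (m:ℝ)^2 * ((C:ℝ)-1) * ∑ i : I, D i := by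
    rw [← hmC, Finset.sum_add_distrib, ← Finset.mul_sum]
    have h2 : ∑ i : I, 2 * D i = 2 * ∑ i : I, D i := by rw [Finset.mul_sum]
    rw [h2]
    field_simp
  have hfinal : ((n : ℝ) / C) ^ 2 * ((C:ℝ) - 1) *
      ∑ i : I, ((1 / ((C : ℝ) - 1)) *
          (∑ l ∈ univ.erase (y i), g (dist (h i) (c (y i))) (dist (h i) (c l)))
        + 2 * dist (h i) (c (y i)))
      = (m:ℝ)^2 * (∑ i : I, ∑ l ∈ univ.erase (y i), G i l)
        + 2 * (m:ℝ)^2 * ((C:ℝ)-1) * ∑ i : I, D i := hRHS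
  rw [hfinal]
  apply le_of_eq
  push_cast [hcastC1]
  simp only [← Finset.mul_sum]
  ring
end
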